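/- arXiv:2307.04302 — 5 statements merged into one kernel-verified Lean document; each statement's English description precedes it below -/
import Mathlib

section
/- In Algorithm 6, if agent a misreports v'_a/τ'_a > v_a/τ_a and receives a strictly larger allocation x'_a > x_a, then the per-unit price she is charged strictly exceeds her true ratio: p'_a/x'_a > v_a/τ_a, i.e., v_a·x'_a < τ_a·p'_a (her RoS constraint is violated). -/
/-- The reported ratio of each agent, rounded down to a power of `1+ε`. -/
noncomputable def wfun (n : ℕ) (ε : ℝ) (ρ : Fin n → ℝ) (i : Fin n) : ℝ :=
  (1 + ε) ^ (⌊Real.logb (1 + ε) (ρ i)⌋ : ℤ)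

/-- The permutation sorting the agents in decreasing order of rounded ratio `wfun`,
breaking ties in a fixed manner (by agent index): position `t` holds agent
`sortPerm n ε ρ t`. -/
noncomputable def sortPerm (n : ℕ) (ε : ℝ) (ρ : Fin n → ℝ) : Equiv.Perm (Fin n) :=
  Tuple.sort (fun i => (toLex (-(wfun n ε ρ i), i) : Lex (ℝ × Fin n)))

/-- The cumulative budget `B[t]` of the agents in the first `t+1` sorted positions. -/
noncomputable def bcum (n : ℕ) (ε : ℝ) (B ρ : Fin n → ℝ) (t : Fin n) : ℝ :=
  ∑ s ∈ Finset.univ.filter (fun s => s ≤ t), B (sortPerm n ε ρ s)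

/-- The set of positions `t` with `B[t] ≤ w_{σ(t)}`; Algorithm 6 uses its maximum `k`. -/
noncomputable def validSet (n : ℕ) (ε : ℝ) (B ρ : Fin n → ℝ) : Finset (Fin n) :=
  Finset.univ.filter (fun t => bcum n ε B ρ t ≤ wfun n ε ρ (sortPerm n ε ρ t))

open Classical in
/-- Algorithm 6 (single divisible item with public budgets), as a function of the
budgets `B` and the reported ratios `ρ i` (standing for `v i / τ i`): returns the
allocation and payment of every agent.  With `k` the maximum valid position,
market clearing price `p̄ = max (B[k]) w_{k+1}` (where `w_{k+1} = 0` if `k` is last):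
if `B[k] > w_{k+1}`, the top-`k` agents get `B i/((1+ε)B[k])` at per-unit price
`C[k] = (1+ε)^⌈log_{1+ε} B[k]⌉`; otherwise they get `B i/((1+ε)w_{k+1})` at per-unit
price `(1+ε)w_{k+1}` (or `w_{k+1}` if `w i = w_{k+1}`), and the agent at position `k+1`
gets the leftover `1/(1+ε) − B[k]/((1+ε)w_{k+1})` at per-unit price `w_{k+1}`. -/
noncomputable def mech (n : ℕ) (ε : ℝ) (B ρ : Fin n → ℝ) :
    (Fin n → ℝ) × (Fin n → ℝ) :=
  if h : (validSet n ε B ρ).Nonempty then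
    let σ := sortPerm n ε ρ
    let k := (validSet n ε B ρ).max' h
    let Bk := bcum n ε B ρ k
    let wnext : ℝ :=
      if h2 : (k : ℕ) + 1 < n then wfun n ε ρ (σ ⟨(k : ℕ) + 1, h2⟩) else 0
    if wnext < Bk then
      let C : ℝ := (1 + ε) ^ (⌈Real.logb (1 + ε) Bk⌉ : ℤ)
      (fun a => if σ.symm a ≤ k then B a / ((1 + ε) * Bk) else 0,
       fun a => if σ.symm a ≤ k then (B a / ((1 + ε) * Bk)) * C else 0)
    else
      (fun a => if σ.symm a ≤ k then B a / ((1 + ε) * wnext)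
        else if (σ.symm a : ℕ) = (k : ℕ) + 1 then
          1 / (1 + ε) - Bk / ((1 + ε) * wnext)
        else 0,
       fun a => if σ.symm a ≤ k then
          (if wnext < wfun n ε ρ a then (B a / ((1 + ε) * wnext)) * ((1 + ε) * wnext)
           else (B a / ((1 + ε) * wnext)) * wnext)
        else if (σ.symm a : ℕ) = (k : ℕ) + 1 then
          (1 / (1 + ε) - Bk / ((1 + ε) * wnext)) * wnext
        else 0)
  else (fun _ => 0, fun _ => 0)


noncomputable def sortW (n : ℕ) (w : Fin n → ℝ) : Equiv.Perm (Fin n) :=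
  Tuple.sort (fun i => (toLex (-(w i), i) : Lex (ℝ × Fin n)))

noncomputable def bcumW (n : ℕ) (B w : Fin n → ℝ) (t : Fin n) : ℝ :=
  ∑ s ∈ Finset.univ.filter (fun s => s ≤ t), B (sortW n w s)

noncomputable def validW (n : ℕ) (B w : Fin n → ℝ) : Finset (Fin n) :=
  Finset.univ.filter (fun t => bcumW n B w t ≤ w (sortW n w t))

open Classical in
noncomputable def mechW (n : ℕ) (ε : ℝ) (B w : Fin n → ℝ) :
    (Fin n → ℝ) × (Fin n → ℝ) :=
  if h : (validW n B w).Nonempty then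
    let σ := sortW n w
    let k := (validW n B w).max' h
    let Bk := bcumW n B w k
    let wnext : ℝ :=
      if h2 : (k : ℕ) + 1 < n then w (σ ⟨(k : ℕ) + 1, h2⟩) else 0
    if wnext < Bk then
      let C : ℝ := (1 + ε) ^ (⌈Real.logb (1 + ε) Bk⌉ : ℤ)
      (fun a => if σ.symm a ≤ k then B a / ((1 + ε) * Bk) else 0,
       fun a => if σ.symm a ≤ k then (B a / ((1 + ε) * Bk)) * C else 0)
    else
      (fun a => if σ.symm a ≤ k then B a / ((1 + ε) * wnext)
        else if (σ.symm a : ℕ) = (k : ℕ) + 1 then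
          1 / (1 + ε) - Bk / ((1 + ε) * wnext)
        else 0,
       fun a => if σ.symm a ≤ k then
          (if wnext < w a then (B a / ((1 + ε) * wnext)) * ((1 + ε) * wnext)
           else (B a / ((1 + ε) * wnext)) * wnext)
        else if (σ.symm a : ℕ) = (k : ℕ) + 1 then
          (1 / (1 + ε) - Bk / ((1 + ε) * wnext)) * wnext
        else 0)
  else (fun _ => 0, fun _ => 0)

namespace Alg6

noncomputable def key (n : ℕ) (ε : ℝ) (ρ : Fin n → ℝ) (i : Fin n) : Lex (ℝ × Fin n) :=
  toLex (-(wfun n ε ρ i), i)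

variable {n : ℕ} {ε : ℝ} {B ρ ρ' : Fin n → ℝ}

lemma mech_eq_mechW : mech n ε B ρ = mechW n ε B (wfun n ε ρ) := rfl

lemma mech_congr (h : wfun n ε ρ = wfun n ε ρ') : mech n ε B ρ = mech n ε B ρ' := by
  rw [mech_eq_mechW, mech_eq_mechW, h]

lemma key_inj : Function.Injective (key n ε ρ) := fun i j h => by
  simpa [key] using congrArg (fun x => (ofLex x).2) h

lemma strictMono_key : StrictMono (key n ε ρ ∘ sortPerm n ε ρ) :=
  (Tuple.monotone_sort (key n ε ρ)).strictMono_of_injective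
    (key_inj.comp (Equiv.injective _))

lemma pos_le_iff {i t : Fin n} :
    (sortPerm n ε ρ).symm i ≤ t ↔ key n ε ρ i ≤ key n ε ρ (sortPerm n ε ρ t) := by
  have h := (strictMono_key (n := n) (ε := ε) (ρ := ρ)).le_iff_le
    (a := (sortPerm n ε ρ).symm i) (b := t)
  simpa [Function.comp] using h.symm

lemma wfun_ge_of_key_le {i j : Fin n} (h : key n ε ρ i ≤ key n ε ρ j) :
    wfun n ε ρ j ≤ wfun n ε ρ i := by
  rcases (Prod.Lex.le_iff).mp h with h1 | h1
  · simpa [key] using le_of_lt h1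
  · simpa [key] using le_of_eq h1.1

lemma wfun_anti {s t : Fin n} (h : s ≤ t) :
    wfun n ε ρ (sortPerm n ε ρ t) ≤ wfun n ε ρ (sortPerm n ε ρ s) := by
  refine wfun_ge_of_key_le ?_
  simpa [Function.comp] using strictMono_key.monotone (a := s) (b := t) h

lemma bcum_eq (t : Fin n) :
    bcum n ε B ρ t = ∑ i ∈ Finset.univ.filter (fun i => (sortPerm n ε ρ).symm i ≤ t), B i := by
  classical
  rw [bcum]
  refine Finset.sum_nbij' (fun s => sortPerm n ε ρ s) (fun i => (sortPerm n ε ρ).symm i)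
    ?_ ?_ ?_ ?_ ?_
  · intro s hs; simp only [Finset.mem_filter, Finset.mem_univ, true_and] at hs ⊢
    simpa using hs
  · intro i hi; simp only [Finset.mem_filter, Finset.mem_univ, true_and] at hi ⊢
    simpa using hi
  · intro s _; simp
  · intro i _; simp
  · intro s _; rfl

lemma mem_validSet {t : Fin n} :
    t ∈ validSet n ε B ρ ↔ bcum n ε B ρ t ≤ wfun n ε ρ (sortPerm n ε ρ t) := by
  simp [validSet]

lemma bcum_le_bcum (hB : ∀ i, 0 < B i) {s t : Fin n} (h : s ≤ t) :
    bcum n ε B ρ s ≤ bcum n ε B ρ t := by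
  rw [bcum, bcum]
  refine Finset.sum_le_sum_of_subset_of_nonneg ?_ (fun i _ _ => (hB _).le)
  intro u hu
  simp only [Finset.mem_filter, Finset.mem_univ, true_and] at hu ⊢
  exact hu.trans h

lemma bcum_pos (hB : ∀ i, 0 < B i) (t : Fin n) : 0 < bcum n ε B ρ t := by
  rw [bcum]
  exact Finset.sum_pos (fun i _ => hB _) ⟨t, by simp⟩

lemma winner_of_gt (hB : ∀ i, 0 < B i) (hne : (validSet n ε B ρ).Nonempty) {i : Fin n}
    (hw : (if h2 : (((validSet n ε B ρ).max' hne : ℕ)) + 1 < n then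
        wfun n ε ρ (sortPerm n ε ρ ⟨((validSet n ε B ρ).max' hne : ℕ) + 1, h2⟩) else 0)
        < wfun n ε ρ i) :
    (sortPerm n ε ρ).symm i ≤ (validSet n ε B ρ).max' hne := by
  set k := (validSet n ε B ρ).max' hne with hk
  by_contra hcon
  push_neg at hcon
  have h1 : (k : ℕ) + 1 ≤ ((sortPerm n ε ρ).symm i : ℕ) := hcon
  have h2 : (k : ℕ) + 1 < n := lt_of_le_of_lt h1 (Fin.is_lt _)
  rw [dif_pos h2] at hw
  have h3 : (⟨(k : ℕ) + 1, h2⟩ : Fin n) ≤ (sortPerm n ε ρ).symm i := h1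
  have h4 := wfun_anti (ε := ε) (ρ := ρ) h3
  rw [Equiv.apply_symm_apply] at h4
  exact absurd (h4.trans_lt hw) (lt_irrefl _)

/-! ### arithmetic lemmas -/

lemma b_pos (hε : 0 < ε) : (0:ℝ) < 1 + ε := by linarith
lemma b_one (hε : 0 < ε) : (1:ℝ) < 1 + ε := by linarith

lemma wfun_pos (hε : 0 < ε) (i : Fin n) : 0 < wfun n ε ρ i :=
  zpow_pos (b_pos hε) _

lemma lt_mul_pow_floor (hε : 0 < ε) {x : ℝ} (hx : 0 < x) :
    x < (1 + ε) * (1 + ε) ^ (⌊Real.logb (1 + ε) x⌋ : ℤ) := by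
  have h1 : ((1 + ε):ℝ) ^ (Real.logb (1 + ε) x) <
      (1 + ε) ^ (((⌊Real.logb (1 + ε) x⌋ : ℤ) + 1 : ℤ) : ℝ) := by
    refine Real.rpow_lt_rpow_of_exponent_lt (b_one hε) ?_
    push_cast
    exact Int.lt_floor_add_one _
  rw [Real.rpow_intCast, Real.rpow_logb (b_pos hε) (by have := b_one hε; linarith) hx,
    zpow_add_one₀ (by have := b_pos hε; linarith)] at h1
  calc x < (1 + ε) ^ (⌊Real.logb (1 + ε) x⌋ : ℤ) * (1 + ε) := h1
    _ = (1 + ε) * (1 + ε) ^ (⌊Real.logb (1 + ε) x⌋ : ℤ) := by ring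

lemma pow_floor_mono (hε : 0 < ε) {x y : ℝ} (hx : 0 < x) (hxy : x ≤ y) :
    ((1 + ε):ℝ) ^ (⌊Real.logb (1 + ε) x⌋ : ℤ) ≤ (1 + ε) ^ (⌊Real.logb (1 + ε) y⌋ : ℤ) := by
  refine zpow_le_zpow_right₀ (b_one hε).le ?_
  exact Int.floor_le_floor (Real.logb_le_logb_of_le (b_one hε) hx hxy)

lemma step_le (hε : 0 < ε) {m m' : ℤ} (h : ((1 + ε):ℝ) ^ m < (1 + ε) ^ m') :
    (1 + ε) * ((1 + ε):ℝ) ^ m ≤ (1 + ε) ^ m' := by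
  have hmm : m < m' := (zpow_lt_zpow_iff_right₀ (b_one hε)).mp h
  have h2 : ((1 + ε):ℝ) ^ (m + 1) ≤ (1 + ε) ^ m' :=
    zpow_le_zpow_right₀ (b_one hε).le (by omega)
  rw [zpow_add_one₀ (by have := b_pos hε; linarith)] at h2
  linarith [h2]

lemma mul_pow_le_pow_ceil (hε : 0 < ε) {x : ℝ} {m : ℤ} (h : ((1 + ε):ℝ) ^ m < x) :
    (1 + ε) * ((1 + ε):ℝ) ^ m ≤ (1 + ε) ^ (⌈Real.logb (1 + ε) x⌉ : ℤ) := by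
  have hx : 0 < x := lt_trans (zpow_pos (b_pos hε) m) h
  have h1 : (m : ℝ) < Real.logb (1 + ε) x := by
    rw [Real.lt_logb_iff_rpow_lt (b_one hε) hx, Real.rpow_intCast]
    exact h
  have h2 : m + 1 ≤ ⌈Real.logb (1 + ε) x⌉ := by have := Int.lt_ceil.mpr h1; omega
  have h3 : ((1 + ε):ℝ) ^ (m + 1) ≤ (1 + ε) ^ (⌈Real.logb (1 + ε) x⌉ : ℤ) :=
    zpow_le_zpow_right₀ (b_one hε).le h2
  rw [zpow_add_one₀ (by have := b_pos hε; linarith)] at h3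
  linarith [h3]

lemma wfun_lt_mul (hε : 0 < ε) {i : Fin n} (h0 : 0 < ρ i) :
    ρ i < (1 + ε) * wfun n ε ρ i :=
  lt_mul_pow_floor hε h0

lemma wfun_mono2 (hε : 0 < ε) {a : Fin n} (h0 : 0 < ρ a) (hle : ρ a ≤ ρ' a) :
    wfun n ε ρ a ≤ wfun n ε ρ' a :=
  pow_floor_mono hε h0 hle

lemma wfun_step (hε : 0 < ε) {a : Fin n} (h : wfun n ε ρ a < wfun n ε ρ' a) :
    (1 + ε) * wfun n ε ρ a ≤ wfun n ε ρ' a :=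
  step_le hε h

lemma wfun_ceil (hε : 0 < ε) {a : Fin n} {x : ℝ} (h : wfun n ε ρ a < x) :
    (1 + ε) * wfun n ε ρ a ≤ (1 + ε) ^ (⌈Real.logb (1 + ε) x⌉ : ℤ) :=
  mul_pow_le_pow_ceil hε h

/-! ### branch equations for `mech` -/

variable (a : Fin n) (hval : (validSet n ε B ρ).Nonempty)

lemma x_none (h : ¬ (validSet n ε B ρ).Nonempty) : (mech n ε B ρ).1 a = 0 := by
  simp only [mech, dif_neg h]

lemma x_case1
    (c : (if h2 : (((validSet n ε B ρ).max' hval : ℕ)) + 1 < n then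
        wfun n ε ρ (sortPerm n ε ρ ⟨((validSet n ε B ρ).max' hval : ℕ) + 1, h2⟩) else 0)
        < bcum n ε B ρ ((validSet n ε B ρ).max' hval))
    (hwin : (sortPerm n ε ρ).symm a ≤ (validSet n ε B ρ).max' hval) :
    (mech n ε B ρ).1 a
      = B a / ((1 + ε) * bcum n ε B ρ ((validSet n ε B ρ).max' hval)) := by
  simp only [mech, dif_pos hval, if_pos c, if_pos hwin]

lemma p_case1
    (c : (if h2 : (((validSet n ε B ρ).max' hval : ℕ)) + 1 < n then
        wfun n ε ρ (sortPerm n ε ρ ⟨((validSet n ε B ρ).max' hval : ℕ) + 1, h2⟩) else 0)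
        < bcum n ε B ρ ((validSet n ε B ρ).max' hval))
    (hwin : (sortPerm n ε ρ).symm a ≤ (validSet n ε B ρ).max' hval) :
    (mech n ε B ρ).2 a
      = (B a / ((1 + ε) * bcum n ε B ρ ((validSet n ε B ρ).max' hval))) *
        ((1 + ε) ^ (⌈Real.logb (1 + ε)
          (bcum n ε B ρ ((validSet n ε B ρ).max' hval))⌉ : ℤ)) := by
  simp only [mech, dif_pos hval, if_pos c, if_pos hwin]

lemma x_zero1
    (c : (if h2 : (((validSet n ε B ρ).max' hval : ℕ)) + 1 < n then
        wfun n ε ρ (sortPerm n ε ρ ⟨((validSet n ε B ρ).max' hval : ℕ) + 1, h2⟩) else 0)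
        < bcum n ε B ρ ((validSet n ε B ρ).max' hval))
    (hwin : ¬ (sortPerm n ε ρ).symm a ≤ (validSet n ε B ρ).max' hval) :
    (mech n ε B ρ).1 a = 0 := by
  simp only [mech, dif_pos hval, if_pos c, if_neg hwin]

lemma x_case2
    (c : ¬ (if h2 : (((validSet n ε B ρ).max' hval : ℕ)) + 1 < n then
        wfun n ε ρ (sortPerm n ε ρ ⟨((validSet n ε B ρ).max' hval : ℕ) + 1, h2⟩) else 0)
        < bcum n ε B ρ ((validSet n ε B ρ).max' hval))
    (hwin : (sortPerm n ε ρ).symm a ≤ (validSet n ε B ρ).max' hval) :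
    (mech n ε B ρ).1 a
      = B a / ((1 + ε) * (if h2 : (((validSet n ε B ρ).max' hval : ℕ)) + 1 < n then
        wfun n ε ρ (sortPerm n ε ρ ⟨((validSet n ε B ρ).max' hval : ℕ) + 1, h2⟩) else 0)) := by
  simp only [mech, dif_pos hval, if_neg c, if_pos hwin]

lemma p_case2hi
    (c : ¬ (if h2 : (((validSet n ε B ρ).max' hval : ℕ)) + 1 < n then
        wfun n ε ρ (sortPerm n ε ρ ⟨((validSet n ε B ρ).max' hval : ℕ) + 1, h2⟩) else 0)
        < bcum n ε B ρ ((validSet n ε B ρ).max' hval))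
    (hwin : (sortPerm n ε ρ).symm a ≤ (validSet n ε B ρ).max' hval)
    (hpr : (if h2 : (((validSet n ε B ρ).max' hval : ℕ)) + 1 < n then
        wfun n ε ρ (sortPerm n ε ρ ⟨((validSet n ε B ρ).max' hval : ℕ) + 1, h2⟩) else 0)
        < wfun n ε ρ a) :
    (mech n ε B ρ).2 a
      = (B a / ((1 + ε) * (if h2 : (((validSet n ε B ρ).max' hval : ℕ)) + 1 < n then
          wfun n ε ρ (sortPerm n ε ρ ⟨((validSet n ε B ρ).max' hval : ℕ) + 1, h2⟩) else 0))) *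
        ((1 + ε) * (if h2 : (((validSet n ε B ρ).max' hval : ℕ)) + 1 < n then
          wfun n ε ρ (sortPerm n ε ρ ⟨((validSet n ε B ρ).max' hval : ℕ) + 1, h2⟩) else 0)) := by
  simp only [mech, dif_pos hval, if_neg c, if_pos hwin, if_pos hpr]

lemma p_case2lo
    (c : ¬ (if h2 : (((validSet n ε B ρ).max' hval : ℕ)) + 1 < n then
        wfun n ε ρ (sortPerm n ε ρ ⟨((validSet n ε B ρ).max' hval : ℕ) + 1, h2⟩) else 0)
        < bcum n ε B ρ ((validSet n ε B ρ).max' hval))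
    (hwin : (sortPerm n ε ρ).symm a ≤ (validSet n ε B ρ).max' hval)
    (hpr : ¬ (if h2 : (((validSet n ε B ρ).max' hval : ℕ)) + 1 < n then
        wfun n ε ρ (sortPerm n ε ρ ⟨((validSet n ε B ρ).max' hval : ℕ) + 1, h2⟩) else 0)
        < wfun n ε ρ a) :
    (mech n ε B ρ).2 a
      = (B a / ((1 + ε) * (if h2 : (((validSet n ε B ρ).max' hval : ℕ)) + 1 < n then
          wfun n ε ρ (sortPerm n ε ρ ⟨((validSet n ε B ρ).max' hval : ℕ) + 1, h2⟩) else 0))) *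
        (if h2 : (((validSet n ε B ρ).max' hval : ℕ)) + 1 < n then
          wfun n ε ρ (sortPerm n ε ρ ⟨((validSet n ε B ρ).max' hval : ℕ) + 1, h2⟩) else 0) := by
  simp only [mech, dif_pos hval, if_neg c, if_pos hwin, if_neg hpr]

lemma x_next
    (c : ¬ (if h2 : (((validSet n ε B ρ).max' hval : ℕ)) + 1 < n then
        wfun n ε ρ (sortPerm n ε ρ ⟨((validSet n ε B ρ).max' hval : ℕ) + 1, h2⟩) else 0)
        < bcum n ε B ρ ((validSet n ε B ρ).max' hval))
    (hwin : ¬ (sortPerm n ε ρ).symm a ≤ (validSet n ε B ρ).max' hval)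
    (heq : (((sortPerm n ε ρ).symm a : ℕ)) = (((validSet n ε B ρ).max' hval : ℕ)) + 1) :
    (mech n ε B ρ).1 a
      = 1 / (1 + ε) - bcum n ε B ρ ((validSet n ε B ρ).max' hval) /
        ((1 + ε) * (if h2 : (((validSet n ε B ρ).max' hval : ℕ)) + 1 < n then
          wfun n ε ρ (sortPerm n ε ρ ⟨((validSet n ε B ρ).max' hval : ℕ) + 1, h2⟩) else 0)) := by
  simp only [mech, dif_pos hval, if_neg c, if_neg hwin, if_pos heq]

lemma p_next
    (c : ¬ (if h2 : (((validSet n ε B ρ).max' hval : ℕ)) + 1 < n then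
        wfun n ε ρ (sortPerm n ε ρ ⟨((validSet n ε B ρ).max' hval : ℕ) + 1, h2⟩) else 0)
        < bcum n ε B ρ ((validSet n ε B ρ).max' hval))
    (hwin : ¬ (sortPerm n ε ρ).symm a ≤ (validSet n ε B ρ).max' hval)
    (heq : (((sortPerm n ε ρ).symm a : ℕ)) = (((validSet n ε B ρ).max' hval : ℕ)) + 1) :
    (mech n ε B ρ).2 a
      = (1 / (1 + ε) - bcum n ε B ρ ((validSet n ε B ρ).max' hval) /
        ((1 + ε) * (if h2 : (((validSet n ε B ρ).max' hval : ℕ)) + 1 < n then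
          wfun n ε ρ (sortPerm n ε ρ ⟨((validSet n ε B ρ).max' hval : ℕ) + 1, h2⟩) else 0))) *
        (if h2 : (((validSet n ε B ρ).max' hval : ℕ)) + 1 < n then
          wfun n ε ρ (sortPerm n ε ρ ⟨((validSet n ε B ρ).max' hval : ℕ) + 1, h2⟩) else 0) := by
  simp only [mech, dif_pos hval, if_neg c, if_neg hwin, if_pos heq]

lemma x_zero2
    (c : ¬ (if h2 : (((validSet n ε B ρ).max' hval : ℕ)) + 1 < n then
        wfun n ε ρ (sortPerm n ε ρ ⟨((validSet n ε B ρ).max' hval : ℕ) + 1, h2⟩) else 0)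
        < bcum n ε B ρ ((validSet n ε B ρ).max' hval))
    (hwin : ¬ (sortPerm n ε ρ).symm a ≤ (validSet n ε B ρ).max' hval)
    (heq : ¬ (((sortPerm n ε ρ).symm a : ℕ)) = (((validSet n ε B ρ).max' hval : ℕ)) + 1) :
    (mech n ε B ρ).1 a = 0 := by
  simp only [mech, dif_pos hval, if_neg c, if_neg hwin, if_neg heq]

/-! ### nonnegativity -/

lemma mech_fst_nonneg (hε : 0 < ε) (hB : ∀ i, 0 < B i) (a : Fin n) :
    0 ≤ (mech n ε B ρ).1 a := by
  classical
  by_cases hval : (validSet n ε B ρ).Nonempty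
  · have hbp : 0 < bcum n ε B ρ ((validSet n ε B ρ).max' hval) := bcum_pos hB _
    by_cases c : (if h2 : (((validSet n ε B ρ).max' hval : ℕ)) + 1 < n then
        wfun n ε ρ (sortPerm n ε ρ ⟨((validSet n ε B ρ).max' hval : ℕ) + 1, h2⟩) else 0)
        < bcum n ε B ρ ((validSet n ε B ρ).max' hval)
    · by_cases hwin : (sortPerm n ε ρ).symm a ≤ (validSet n ε B ρ).max' hval
      · rw [x_case1 a hval c hwin]
        exact div_nonneg (hB a).le (mul_pos (b_pos hε) hbp).le
      · rw [x_zero1 a hval c hwin]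
    · have hwnp : 0 < (if h2 : (((validSet n ε B ρ).max' hval : ℕ)) + 1 < n then
          wfun n ε ρ (sortPerm n ε ρ ⟨((validSet n ε B ρ).max' hval : ℕ) + 1, h2⟩) else 0) :=
        lt_of_lt_of_le hbp (not_lt.mp c)
      by_cases hwin : (sortPerm n ε ρ).symm a ≤ (validSet n ε B ρ).max' hval
      · rw [x_case2 a hval c hwin]
        exact div_nonneg (hB a).le (mul_pos (b_pos hε) hwnp).le
      · by_cases heq : (((sortPerm n ε ρ).symm a : ℕ))
            = (((validSet n ε B ρ).max' hval : ℕ)) + 1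
        · rw [x_next a hval c hwin heq]
          rw [sub_nonneg, div_le_div_iff₀ (mul_pos (b_pos hε) hwnp) (b_pos hε)]
          nlinarith [not_lt.mp c, hwnp, b_pos hε]
        · rw [x_zero2 a hval c hwin heq]
  · rw [x_none a hval]

/-! ### the key comparison lemma -/

lemma main_contra (hε : 0 < ε) (hB : ∀ i, 0 < B i) (a : Fin n)
    (hw : ∀ i, i ≠ a → wfun n ε ρ' i = wfun n ε ρ i)
    (hval : (validSet n ε B ρ).Nonempty) (hval' : (validSet n ε B ρ').Nonempty)
    (hwin' : (sortPerm n ε ρ').symm a ≤ (validSet n ε B ρ').max' hval')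
    {D' : ℝ}
    (hBk'le : bcum n ε B ρ' ((validSet n ε B ρ').max' hval') ≤ D')
    (hwnle : (if h2 : (((validSet n ε B ρ').max' hval' : ℕ)) + 1 < n then
        wfun n ε ρ' (sortPerm n ε ρ' ⟨((validSet n ε B ρ').max' hval' : ℕ) + 1, h2⟩) else 0) ≤ D')
    (hD'wa : D' ≤ wfun n ε ρ a)
    (hstrict : (if h2 : (((validSet n ε B ρ').max' hval' : ℕ)) + 1 < n then
        wfun n ε ρ' (sortPerm n ε ρ' ⟨((validSet n ε B ρ').max' hval' : ℕ) + 1, h2⟩) else 0)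
        < wfun n ε ρ a) :
    B a / ((1 + ε) * D') ≤ (mech n ε B ρ).1 a := by
  classical
  have stepA : ∀ i, key n ε ρ i ≤ key n ε ρ a →
      (sortPerm n ε ρ').symm i ≤ (validSet n ε B ρ').max' hval' := by
    intro i hi
    by_cases hia : i = a
    · subst hia; exact hwin'
    · refine winner_of_gt hB hval' ?_
      rw [hw i hia]
      exact lt_of_lt_of_le hstrict (wfun_ge_of_key_le hi)
  have hsubsum : ∀ t : Fin n,
      (∀ i, (sortPerm n ε ρ).symm i ≤ t →
        (sortPerm n ε ρ').symm i ≤ (validSet n ε B ρ').max' hval') →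
      bcum n ε B ρ t ≤ bcum n ε B ρ' ((validSet n ε B ρ').max' hval') := by
    intro t ht
    rw [bcum_eq, bcum_eq]
    refine Finset.sum_le_sum_of_subset_of_nonneg ?_ (fun i _ _ => (hB i).le)
    intro i hi
    simp only [Finset.mem_filter, Finset.mem_univ, true_and] at hi ⊢
    exact ht i hi
  have hbcum_a : bcum n ε B ρ ((sortPerm n ε ρ).symm a)
      ≤ bcum n ε B ρ' ((validSet n ε B ρ').max' hval') := by
    refine hsubsum _ (fun i hi => stepA i ?_)
    have h1 := pos_le_iff.mp hi
    rwa [Equiv.apply_symm_apply] at h1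
  have hmem : (sortPerm n ε ρ).symm a ∈ validSet n ε B ρ := by
    rw [mem_validSet, Equiv.apply_symm_apply]
    exact le_trans hbcum_a (le_trans hBk'le hD'wa)
  have hwin : (sortPerm n ε ρ).symm a ≤ (validSet n ε B ρ).max' hval :=
    Finset.le_max' _ _ hmem
  have hkval : bcum n ε B ρ ((validSet n ε B ρ).max' hval)
      ≤ wfun n ε ρ (sortPerm n ε ρ ((validSet n ε B ρ).max' hval)) :=
    mem_validSet.mp ((validSet n ε B ρ).max'_mem hval)
  have hD'pos : 0 < D' := lt_of_lt_of_le (bcum_pos hB _) hBk'le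
  have hBkD : bcum n ε B ρ ((validSet n ε B ρ).max' hval) ≤ D' := by
    by_contra hcon
    push_neg at hcon
    have hsub : bcum n ε B ρ ((validSet n ε B ρ).max' hval)
        ≤ bcum n ε B ρ' ((validSet n ε B ρ').max' hval') := by
      refine hsubsum _ ?_
      intro i hi
      by_cases hia : i = a
      · subst hia; exact hwin'
      · refine winner_of_gt hB hval' ?_
        rw [hw i hia]
        have h5 : wfun n ε ρ (sortPerm n ε ρ ((validSet n ε B ρ).max' hval))
            ≤ wfun n ε ρ i := by
          have h6 := wfun_anti (ε := ε) (ρ := ρ) hi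
          rwa [Equiv.apply_symm_apply] at h6
        exact lt_of_le_of_lt hwnle (lt_of_lt_of_le hcon (le_trans hkval h5))
    exact absurd (le_trans hsub hBk'le) (not_le.mpr hcon)
  have hwnD : (if h2 : (((validSet n ε B ρ).max' hval : ℕ)) + 1 < n then
      wfun n ε ρ (sortPerm n ε ρ ⟨((validSet n ε B ρ).max' hval : ℕ) + 1, h2⟩) else 0) ≤ D' := by
    by_cases h2 : (((validSet n ε B ρ).max' hval : ℕ)) + 1 < n
    · rw [dif_pos h2]
      by_contra hcon
      push_neg at hcon
      have hsub : bcum n ε B ρ ⟨((validSet n ε B ρ).max' hval : ℕ) + 1, h2⟩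
          ≤ bcum n ε B ρ' ((validSet n ε B ρ').max' hval') := by
        refine hsubsum _ ?_
        intro i hi
        by_cases hia : i = a
        · subst hia; exact hwin'
        · refine winner_of_gt hB hval' ?_
          rw [hw i hia]
          have h4 := pos_le_iff.mp hi
          have h5 := wfun_ge_of_key_le h4
          exact lt_of_le_of_lt hwnle (lt_of_lt_of_le hcon h5)
      have hmem1 : (⟨((validSet n ε B ρ).max' hval : ℕ) + 1, h2⟩ : Fin n)
          ∈ validSet n ε B ρ := by
        rw [mem_validSet]
        exact le_trans hsub (le_trans hBk'le hcon.le)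
      have h6 := Finset.le_max' _ _ hmem1
      have h7 : ((validSet n ε B ρ).max' hval : ℕ) + 1
          ≤ ((validSet n ε B ρ).max' hval : ℕ) := h6
      omega
    · rw [dif_neg h2]; exact hD'pos.le
  by_cases c : (if h2 : (((validSet n ε B ρ).max' hval : ℕ)) + 1 < n then
      wfun n ε ρ (sortPerm n ε ρ ⟨((validSet n ε B ρ).max' hval : ℕ) + 1, h2⟩) else 0)
      < bcum n ε B ρ ((validSet n ε B ρ).max' hval)
  · rw [x_case1 a hval c hwin]
    refine div_le_div_of_nonneg_left (hB a).le (mul_pos (b_pos hε) (bcum_pos hB _)) ?_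
    exact mul_le_mul_of_nonneg_left hBkD (b_pos hε).le
  · have hwnp : 0 < (if h2 : (((validSet n ε B ρ).max' hval : ℕ)) + 1 < n then
        wfun n ε ρ (sortPerm n ε ρ ⟨((validSet n ε B ρ).max' hval : ℕ) + 1, h2⟩) else 0) :=
      lt_of_lt_of_le (bcum_pos hB _) (not_lt.mp c)
    rw [x_case2 a hval c hwin]
    refine div_le_div_of_nonneg_left (hB a).le (mul_pos (b_pos hε) hwnp) ?_
    exact mul_le_mul_of_nonneg_left hwnD (b_pos hε).le

end Alg6

/-- In Algorithm 6, an agent `a` who misreports a higher ratio `v' a / τ' a > v a / τ a`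
and thereby receives a strictly larger allocation necessarily violates her true RoS
constraint: `v a * x' a < τ a * p' a`, where `(x', p')` is the outcome under the
misreport. -/
theorem stmt_13 (n : ℕ) (ε : ℝ) (hε : 0 < ε) (B v τ ρ ρ' : Fin n → ℝ) (a : Fin n)
    (hB : ∀ i, 0 < B i) (hv : ∀ i, 0 < v i) (hτ : ∀ i, 0 < τ i)
    (hρ : ∀ i, ρ i = v i / τ i)
    (hρ'pos : ∀ i, 0 < ρ' i)
    (hother : ∀ i, i ≠ a → ρ' i = ρ i) (hinc : ρ a < ρ' a)
    (hval : (validSet n ε B ρ).Nonempty) (hval' : (validSet n ε B ρ').Nonempty)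
    (hmore : (mech n ε B ρ).1 a < (mech n ε B ρ').1 a) :
    v a * (mech n ε B ρ').1 a < τ a * (mech n ε B ρ').2 a := by
  classical
  have hτa : 0 < τ a := hτ a
  have hρa : 0 < ρ a := by rw [hρ a]; exact div_pos (hv a) (hτ a)
  have hxnn : 0 ≤ (mech n ε B ρ).1 a := Alg6.mech_fst_nonneg hε hB a
  have hx'pos : 0 < (mech n ε B ρ').1 a := lt_of_le_of_lt hxnn hmore
  have hwfuneq : ∀ i, i ≠ a → wfun n ε ρ' i = wfun n ε ρ i := by
    intro i hia; unfold wfun; rw [hother i hia]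
  have hwale : wfun n ε ρ a ≤ wfun n ε ρ' a :=
    Alg6.wfun_mono2 hε hρa hinc.le
  have hwane : wfun n ε ρ a ≠ wfun n ε ρ' a := by
    intro heq
    have hfe : wfun n ε ρ = wfun n ε ρ' := by
      funext i
      by_cases hia : i = a
      · subst hia; exact heq
      · exact (hwfuneq i hia).symm
    rw [Alg6.mech_congr (B := B) hfe] at hmore
    exact lt_irrefl _ hmore
  have hwlt : wfun n ε ρ a < wfun n ε ρ' a := lt_of_le_of_ne hwale hwane
  have hstep : (1 + ε) * wfun n ε ρ a ≤ wfun n ε ρ' a := Alg6.wfun_step hε hwlt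
  have hρstep : ρ a < (1 + ε) * wfun n ε ρ a := Alg6.wfun_lt_mul hε hρa
  have finstep : ∀ x c : ℝ, 0 < x → ρ a < c → v a * x < τ a * (x * c) := by
    intro x c hx hc
    have hva : v a = ρ a * τ a := by
      rw [hρ a]; field_simp
    have h1 : ρ a * (τ a * x) < c * (τ a * x) :=
      mul_lt_mul_of_pos_right hc (mul_pos hτa hx)
    calc v a * x = ρ a * (τ a * x) := by rw [hva]; ring
      _ < c * (τ a * x) := h1
      _ = τ a * (x * c) := by ring
  have hbp' : 0 < bcum n ε B ρ' ((validSet n ε B ρ').max' hval') := Alg6.bcum_pos hB _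
  by_cases c1 : (if h2 : (((validSet n ε B ρ').max' hval' : ℕ)) + 1 < n then
      wfun n ε ρ' (sortPerm n ε ρ' ⟨((validSet n ε B ρ').max' hval' : ℕ) + 1, h2⟩) else 0)
      < bcum n ε B ρ' ((validSet n ε B ρ').max' hval')
  · by_cases hwin : (sortPerm n ε ρ').symm a ≤ (validSet n ε B ρ').max' hval'
    · have hx := Alg6.x_case1 a hval' c1 hwin
      have hp := Alg6.p_case1 a hval' c1 hwin
      by_cases hcmp : bcum n ε B ρ' ((validSet n ε B ρ').max' hval') ≤ wfun n ε ρ a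
      · exfalso
        have hge := Alg6.main_contra hε hB a hwfuneq hval hval' hwin
          (D' := bcum n ε B ρ' ((validSet n ε B ρ').max' hval'))
          le_rfl c1.le hcmp (lt_of_lt_of_le c1 hcmp)
        rw [hx] at hmore
        linarith
      · push_neg at hcmp
        rw [hx, hp]
        refine finstep _ _ ?_ ?_
        · exact div_pos (hB a) (mul_pos (Alg6.b_pos hε) hbp')
        · exact lt_of_lt_of_le hρstep (Alg6.wfun_ceil hε hcmp)
    · rw [Alg6.x_zero1 a hval' c1 hwin] at hx'pos
      exact absurd hx'pos (lt_irrefl 0)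
  · have hwnp : 0 < (if h2 : (((validSet n ε B ρ').max' hval' : ℕ)) + 1 < n then
        wfun n ε ρ' (sortPerm n ε ρ' ⟨((validSet n ε B ρ').max' hval' : ℕ) + 1, h2⟩) else 0) :=
      lt_of_lt_of_le hbp' (not_lt.mp c1)
    by_cases hwin : (sortPerm n ε ρ').symm a ≤ (validSet n ε B ρ').max' hval'
    · have hx := Alg6.x_case2 a hval' c1 hwin
      have hxpos : 0 < B a / ((1 + ε) *
          (if h2 : (((validSet n ε B ρ').max' hval' : ℕ)) + 1 < n then
            wfun n ε ρ' (sortPerm n ε ρ' ⟨((validSet n ε B ρ').max' hval' : ℕ) + 1, h2⟩)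
            else 0)) :=
        div_pos (hB a) (mul_pos (Alg6.b_pos hε) hwnp)
      by_cases hpr : (if h2 : (((validSet n ε B ρ').max' hval' : ℕ)) + 1 < n then
          wfun n ε ρ' (sortPerm n ε ρ' ⟨((validSet n ε B ρ').max' hval' : ℕ) + 1, h2⟩) else 0)
          < wfun n ε ρ' a
      · have hp := Alg6.p_case2hi a hval' c1 hwin hpr
        by_cases hwa2 : wfun n ε ρ a ≤ (if h2 : (((validSet n ε B ρ').max' hval' : ℕ)) + 1 < n
            then wfun n ε ρ' (sortPerm n ε ρ' ⟨((validSet n ε B ρ').max' hval' : ℕ) + 1, h2⟩)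
            else 0)
        · rw [hx, hp]
          refine finstep _ _ hxpos ?_
          refine lt_of_lt_of_le hρstep ?_
          exact mul_le_mul_of_nonneg_left hwa2 (Alg6.b_pos hε).le
        · push_neg at hwa2
          exfalso
          have hge := Alg6.main_contra hε hB a hwfuneq hval hval' hwin
            (D' := (if h2 : (((validSet n ε B ρ').max' hval' : ℕ)) + 1 < n then
              wfun n ε ρ' (sortPerm n ε ρ' ⟨((validSet n ε B ρ').max' hval' : ℕ) + 1, h2⟩)
              else 0))
            (not_lt.mp c1) le_rfl hwa2.le hwa2
          rw [hx] at hmore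
          linarith
      · have hp := Alg6.p_case2lo a hval' c1 hwin hpr
        push_neg at hpr
        rw [hx, hp]
        refine finstep _ _ hxpos ?_
        exact lt_of_lt_of_le hρstep (le_trans hstep hpr)
    · by_cases heq : (((sortPerm n ε ρ').symm a : ℕ))
          = (((validSet n ε B ρ').max' hval' : ℕ)) + 1
      · have h2' : (((validSet n ε B ρ').max' hval' : ℕ)) + 1 < n := by
          rw [← heq]; exact Fin.is_lt _
        have hfin : (⟨(((validSet n ε B ρ').max' hval' : ℕ)) + 1, h2'⟩ : Fin n)
            = (sortPerm n ε ρ').symm a := by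
          apply Fin.ext; exact heq.symm
        have hwneq : (if h2 : (((validSet n ε B ρ').max' hval' : ℕ)) + 1 < n then
            wfun n ε ρ' (sortPerm n ε ρ' ⟨((validSet n ε B ρ').max' hval' : ℕ) + 1, h2⟩) else 0)
            = wfun n ε ρ' a := by
          rw [dif_pos h2', hfin, Equiv.apply_symm_apply]
        have hx := Alg6.x_next a hval' c1 hwin heq
        have hp := Alg6.p_next a hval' c1 hwin heq
        rw [hx] at hx'pos
        rw [hx, hp]
        refine finstep _ _ hx'pos ?_
        rw [hwneq]
        exact lt_of_lt_of_le hρstep hstep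
      · rw [Alg6.x_zero2 a hval' c1 hwin heq] at hx'pos
        exact absurd hx'pos (lt_irrefl 0)
end

section
/- In the multiple-item additive setting with split budgets B_{ij} = B_i·v_{ij}/Σ_{j'} v_{ij'}, the optimal revenue OPT_bar of the sub-budget-constrained problem (where agent i may spend at most B_{ij} on item j) satisfies OPT_bar ≥ OPT/(2√n + 3), where OPT is the optimal revenue of the original problem with overall budgets B_i. -/
/-- Splitting budgets proportionally to values, the optimal revenue of the
sub-budget-constrained problem (agent `i` may spend at most
`B i * v i j / Σ_{j'} v i j'` on item `j`) is at least a `1/(2√n + 3)` fraction of the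
optimal revenue of the original problem with overall budgets `B i`. -/
theorem stmt_14 (n m : ℕ) (v : Fin n → Fin m → ℝ) (B τ : Fin n → ℝ)
    (hv : ∀ i j, 0 ≤ v i j) (hB : ∀ i, 0 < B i) (hτ : ∀ i, 0 < τ i)
    (w : Fin n → Fin m → ℝ) (hw : ∀ i j, w i j = v i j / τ i)
    (Bij : Fin n → Fin m → ℝ)
    (hBij : ∀ i j, Bij i j = B i * v i j / ∑ j', v i j') :
    sSup {t : ℝ | ∃ x : Fin n → Fin m → ℝ,
        (∀ i j, 0 ≤ x i j) ∧ (∀ j, ∑ i, x i j ≤ 1) ∧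
        (∀ i, ∑ j, x i j * w i j ≤ B i) ∧
        t = ∑ i, ∑ j, x i j * w i j}
      / (2 * Real.sqrt n + 3)
    ≤ sSup {t : ℝ | ∃ x : Fin n → Fin m → ℝ,
        (∀ i j, 0 ≤ x i j) ∧ (∀ j, ∑ i, x i j ≤ 1) ∧
        (∀ i, ∑ j, x i j * w i j ≤ B i) ∧
        (∀ i j, x i j * w i j ≤ Bij i j) ∧
        t = ∑ i, ∑ j, x i j * w i j} := by
  classical
  set s : ℝ := Real.sqrt n with hsdef
  have hs0 : 0 ≤ s := Real.sqrt_nonneg n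
  set s' : ℝ := max s 1 with hs'def
  have hs'1 : (1:ℝ) ≤ s' := le_max_right _ _
  have hs'0 : (0:ℝ) < s' := lt_of_lt_of_le one_pos hs'1
  have hss' : s ≤ s' := le_max_left _ _
  have hs'le : s' ≤ s + 1 := max_le (by linarith) (by linarith)
  have hsq : s * s = (n : ℝ) := Real.mul_self_sqrt (Nat.cast_nonneg n)
  have hsp : (0:ℝ) < s + 1 := by linarith
  have hw0 : ∀ i j, 0 ≤ w i j := fun i j => by
    rw [hw]; exact div_nonneg (hv i j) (hτ i).le
  set W : Fin n → ℝ := fun i => ∑ j, w i j with hWdef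
  have hW0 : ∀ i, 0 ≤ W i := fun i => Finset.sum_nonneg fun j _ => hw0 i j
  set c : Fin n → ℝ := fun i => B i / W i with hcdef
  have hc0 : ∀ i, 0 ≤ c i := fun i => div_nonneg (hB i).le (hW0 i)
  have hBijc : ∀ i j, Bij i j = c i * w i j := by
    intro i j
    have hv' : v i j = τ i * w i j := by
      rw [hw, ← mul_div_assoc, mul_div_cancel_left₀ _ (hτ i).ne']
    have hsum : ∑ j', v i j' = τ i * W i := by
      simp only [hWdef, Finset.mul_sum]
      refine Finset.sum_congr rfl fun j' _ => ?_
      rw [hw, ← mul_div_assoc, mul_div_cancel_left₀ _ (hτ i).ne']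
    rw [hBij, hv', hsum,
      show B i * (τ i * w i j) = τ i * (B i * w i j) by ring,
      mul_div_mul_left _ _ (hτ i).ne', hcdef]
    simp only
    rw [mul_div_right_comm]
  have hcW : ∀ i, c i * W i ≤ B i := by
    intro i
    rcases eq_or_lt_of_le (hW0 i) with h | h
    · rw [← h, mul_zero]; exact (hB i).le
    · rw [hcdef]; simp only
      rw [div_mul_cancel₀ _ h.ne']
  -- per-agent revenue bound for any feasible solution
  have hagent : ∀ (x : Fin n → Fin m → ℝ), (∀ i j, 0 ≤ x i j) →
      (∀ i, ∑ j, x i j * w i j ≤ B i) →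
      ∀ i, ∑ j, x i j * w i j ≤ c i * W i := by
    intro x hx hxb i
    rcases eq_or_lt_of_le (hW0 i) with h | h
    · have hwz : ∀ j ∈ Finset.univ, w i j = 0 :=
        (Finset.sum_eq_zero_iff_of_nonneg (fun j _ => hw0 i j)).mp h.symm
      have : ∑ j, x i j * w i j = 0 :=
        Finset.sum_eq_zero fun j hj => by rw [hwz j hj, mul_zero]
      rw [this, ← h, mul_zero]
    · calc ∑ j, x i j * w i j ≤ B i := hxb i
        _ = c i * W i := by rw [hcdef]; simp only; rw [div_mul_cancel₀ _ h.ne']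
  set T2 : Set ℝ := {t : ℝ | ∃ x : Fin n → Fin m → ℝ,
        (∀ i j, 0 ≤ x i j) ∧ (∀ j, ∑ i, x i j ≤ 1) ∧
        (∀ i, ∑ j, x i j * w i j ≤ B i) ∧
        (∀ i j, x i j * w i j ≤ Bij i j) ∧
        t = ∑ i, ∑ j, x i j * w i j} with hT2def
  have hbdd2 : BddAbove T2 := by
    refine ⟨∑ i, B i, fun t ht => ?_⟩
    obtain ⟨x, hx0, hx1, hxb, hxc, rfl⟩ := ht
    exact Finset.sum_le_sum fun i _ => hxb i
  have h0mem : (0:ℝ) ∈ T2 := by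
    refine ⟨fun _ _ => 0, fun _ _ => le_refl 0, fun j => by simp,
      fun i => by simpa using (hB i).le, fun i j => by
        simpa using (by rw [hBijc]; exact mul_nonneg (hc0 i) (hw0 i j)), by simp⟩
  have hSup0 : 0 ≤ sSup T2 := le_csSup hbdd2 h0mem
  have key : ∀ t ∈ {t : ℝ | ∃ x : Fin n → Fin m → ℝ,
        (∀ i j, 0 ≤ x i j) ∧ (∀ j, ∑ i, x i j ≤ 1) ∧
        (∀ i, ∑ j, x i j * w i j ≤ B i) ∧
        t = ∑ i, ∑ j, x i j * w i j}, t ≤ (2 * s + 3) * sSup T2 := by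
    rintro t ⟨x, hx0, hx1, hxb, rfl⟩
    have hx_le_one : ∀ i j, x i j ≤ 1 := fun i j =>
      le_trans (Finset.single_le_sum (fun i' _ => hx0 i' j) (Finset.mem_univ i)) (hx1 j)
    -- solution 1: rich agents
    set y1 : Fin n → Fin m → ℝ :=
      fun i j => if 1 / (s+1) ≤ c i then min (x i j) (c i) else 0 with hy1def
    have hy1le : ∀ i j, y1 i j ≤ x i j := by
      intro i j; rw [hy1def]; simp only
      split
      · exact min_le_left _ _
      · exact hx0 i j
    have hy1_0 : ∀ i j, 0 ≤ y1 i j := by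
      intro i j; rw [hy1def]; simp only
      split
      · exact le_min (hx0 i j) (hc0 i)
      · exact le_refl 0
    have hr1mem : (∑ i, ∑ j, y1 i j * w i j) ∈ T2 := by
      refine ⟨y1, hy1_0, fun j => le_trans (Finset.sum_le_sum fun i _ => hy1le i j) (hx1 j),
        fun i => le_trans (Finset.sum_le_sum fun j _ =>
          mul_le_mul_of_nonneg_right (hy1le i j) (hw0 i j)) (hxb i),
        fun i j => ?_, rfl⟩
      rw [hBijc, hy1def]; simp only
      split
      · exact mul_le_mul_of_nonneg_right (min_le_right _ _) (hw0 i j)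
      · simpa using mul_nonneg (hc0 i) (hw0 i j)
    -- solution 2: poor agents
    set y2 : Fin n → Fin m → ℝ :=
      fun i j => if 1 / (s+1) ≤ c i then 0 else c i / s' with hy2def
    have hy2_0 : ∀ i j, 0 ≤ y2 i j := by
      intro i j; rw [hy2def]; simp only
      split
      · exact le_refl 0
      · exact div_nonneg (hc0 i) hs'0.le
    have hy2sum : ∀ i, ∑ j, y2 i j * w i j = (c i / s') * W i ∨
        ∑ j, y2 i j * w i j = 0 := by
      intro i
      rw [hy2def]; simp only
      split
      · right; simp
      · left
        rw [hWdef]; simp only [Finset.mul_sum]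
    have hr2mem : (∑ i, ∑ j, y2 i j * w i j) ∈ T2 := by
      refine ⟨y2, hy2_0, fun j => ?_, fun i => ?_, fun i j => ?_, rfl⟩
      · -- item constraint
        have hterm : ∀ i ∈ Finset.univ, y2 i j ≤ 1 / ((s+1) * s') := by
          intro i _
          rw [hy2def]; simp only
          split
          · positivity
          · rename_i h
            have hci : c i ≤ 1 / (s+1) := (not_le.mp h).le
            rw [div_le_div_iff₀ hs'0 (by positivity)]
            have h1 : c i * (s+1) ≤ 1 := (le_div_iff₀ hsp).mp hci
            calc c i * ((s+1) * s') = (c i * (s+1)) * s' := by ring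
              _ ≤ 1 * s' := mul_le_mul_of_nonneg_right h1 hs'0.le
              _ = 1 * s' := rfl
        calc ∑ i, y2 i j ≤ ∑ _i : Fin n, 1 / ((s+1) * s') := Finset.sum_le_sum hterm
          _ = (n : ℝ) * (1 / ((s+1) * s')) := by
              rw [Finset.sum_const, Finset.card_univ, Fintype.card_fin, nsmul_eq_mul]
          _ ≤ 1 := by
              rw [mul_one_div, div_le_one (by positivity)]
              nlinarith
      · -- budget constraint
        rcases hy2sum i with h | h
        · rw [h]
          calc c i / s' * W i = (c i * W i) / s' := by ring
            _ ≤ B i / s' := by gcongr; exact hcW i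
            _ ≤ B i := div_le_self (hB i).le hs'1
        · rw [h]; exact (hB i).le
      · -- cap constraint
        rw [hBijc, hy2def]; simp only
        split
        · simpa using mul_nonneg (hc0 i) (hw0 i j)
        · exact mul_le_mul_of_nonneg_right (div_le_self (hc0 i) hs'1) (hw0 i j)
    have hr1le : (∑ i, ∑ j, y1 i j * w i j) ≤ sSup T2 := le_csSup hbdd2 hr1mem
    have hr2le : (∑ i, ∑ j, y2 i j * w i j) ≤ sSup T2 := le_csSup hbdd2 hr2mem
    -- split the objective
    have hsplit : ∑ i, ∑ j, x i j * w i j =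
        (∑ i, ∑ j, if 1 / (s+1) ≤ c i then x i j * w i j else 0) +
        (∑ i, ∑ j, if 1 / (s+1) ≤ c i then 0 else x i j * w i j) := by
      rw [← Finset.sum_add_distrib]
      refine Finset.sum_congr rfl fun i _ => ?_
      rw [← Finset.sum_add_distrib]
      refine Finset.sum_congr rfl fun j _ => ?_
      split <;> simp
    have hA : (∑ i, ∑ j, if 1 / (s+1) ≤ c i then x i j * w i j else 0) ≤
        (s + 1) * ∑ i, ∑ j, y1 i j * w i j := by
      rw [Finset.mul_sum]
      refine Finset.sum_le_sum fun i _ => ?_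
      rw [Finset.mul_sum]
      refine Finset.sum_le_sum fun j _ => ?_
      rw [hy1def]; simp only
      split
      · rename_i h
        rcases le_total (x i j) (c i) with hxc | hxc
        · rw [min_eq_left hxc]
          nlinarith [mul_nonneg (hx0 i j) (hw0 i j), hs0]
        · rw [min_eq_right hxc]
          have h1 : x i j ≤ (s+1) * c i := by
            have : (1:ℝ) ≤ (s+1) * c i := by
              rw [div_le_iff₀ hsp] at h; linarith [mul_comm (c i) (s+1)]
            linarith [hx_le_one i j]
          calc x i j * w i j ≤ ((s+1) * c i) * w i j :=
                mul_le_mul_of_nonneg_right h1 (hw0 i j)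
            _ = (s+1) * (c i * w i j) := by ring
      · simp
    have hBp : (∑ i, ∑ j, if 1 / (s+1) ≤ c i then 0 else x i j * w i j) ≤
        s' * ∑ i, ∑ j, y2 i j * w i j := by
      rw [Finset.mul_sum]
      refine Finset.sum_le_sum fun i _ => ?_
      by_cases h : 1 / (s+1) ≤ c i
      · simp only [h, if_true]
        have : ∑ j, y2 i j * w i j = 0 := by
          simp only [hy2def, if_pos h, zero_mul, Finset.sum_const_zero]
        rw [this]; simp
      · simp only [h, if_false]
        have h2 : ∑ j, y2 i j * w i j = (c i / s') * W i := by
          rw [hy2def]; simp only [h, if_false]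
          rw [hWdef]; simp only [Finset.mul_sum]
        rw [h2]
        calc ∑ j, x i j * w i j ≤ c i * W i := hagent x hx0 hxb i
          _ = s' * (c i / s' * W i) := by field_simp
    calc ∑ i, ∑ j, x i j * w i j
        ≤ (s+1) * (∑ i, ∑ j, y1 i j * w i j) + s' * (∑ i, ∑ j, y2 i j * w i j) := by
          rw [hsplit]; exact add_le_add hA hBp
      _ ≤ (s+1) * sSup T2 + (s+2) * sSup T2 := by
          refine add_le_add (mul_le_mul_of_nonneg_left hr1le (by linarith)) ?_
          calc s' * (∑ i, ∑ j, y2 i j * w i j) ≤ s' * sSup T2 :=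
                mul_le_mul_of_nonneg_left hr2le hs'0.le
            _ ≤ (s+2) * sSup T2 := mul_le_mul_of_nonneg_right (by linarith) hSup0
      _ = (2 * s + 3) * sSup T2 := by ring
  have hmain : sSup {t : ℝ | ∃ x : Fin n → Fin m → ℝ,
        (∀ i j, 0 ≤ x i j) ∧ (∀ j, ∑ i, x i j ≤ 1) ∧
        (∀ i, ∑ j, x i j * w i j ≤ B i) ∧
        t = ∑ i, ∑ j, x i j * w i j} ≤ (2 * s + 3) * sSup T2 :=
    Real.sSup_le key (by positivity)
  rw [div_le_iff₀ (by positivity : (0:ℝ) < 2 * s + 3), mul_comm]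
  exact hmain
end

section
/- In Algorithm 7, for every agent i, the final payment p_i satisfies p_i ≥ min{1/2, 1/(1+ε)} · Σ_j z_{ij}·p_i(z_j), where p_i(z_j) is agent i's payment in the single-item auction for item j. -/
/-- In Algorithm 7, with per-item single-item-auction allocations `z` and payments
`q i j = p_i(z_j)` satisfying `q i j ≤ Bij i j` and the per-item RoS constraint,
where `g i` is the item with minimum positive allocation of agent `i` and the supply
clipping guarantees `q i (g i) ≥ Bij i (g i)/(1+ε)` whenever `0 < z i (g i) < 1/2`,
the final payment `p i = min (B i) (U i (h i)/τ i)` satisfies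
`p i ≥ min (1/2) (1/(1+ε)) * Σ_j z i j * q i j`. -/
theorem stmt_17 (n m : ℕ) (ε : ℝ) (hε : 0 < ε)
    (v : Fin n → Fin m → ℝ) (B τ : Fin n → ℝ)
    (hv : ∀ i j, 0 < v i j) (hB : ∀ i, 0 < B i) (hτ : ∀ i, 0 < τ i)
    (Bij : Fin n → Fin m → ℝ)
    (hBij : ∀ i j, Bij i j = B i * v i j / ∑ j', v i j')
    (z : Fin n → Fin m → ℝ)
    (hz0 : ∀ i j, 0 ≤ z i j) (hz1 : ∀ j, ∑ i, z i j ≤ 1) (hzle : ∀ i j, z i j ≤ 1)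
    (q : Fin n → Fin m → ℝ)
    (hq0 : ∀ i j, 0 ≤ q i j)
    (hqB : ∀ i j, q i j ≤ Bij i j)
    (hqRoS : ∀ i j, τ i * q i j ≤ v i j * z i j)
    (g : Fin n → Fin m)
    (hg : ∀ i j, 0 < z i j → 0 < z i (g i) ∧ z i (g i) ≤ z i j)
    (hclip : ∀ i, 0 < z i (g i) → z i (g i) < 1 / 2 →
      Bij i (g i) / (1 + ε) ≤ q i (g i))
    (T : Fin n → Fin m → Finset (Fin m))
    (hT : ∀ i j, T i j = Finset.univ.filter (fun j' => z i j ≤ z i j'))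
    (U : Fin n → Fin m → ℝ)
    (hU : ∀ i j, U i j = z i j * ∑ j' ∈ T i j, v i j')
    (h : Fin n → Fin m) (hh : ∀ i j, U i j ≤ U i (h i))
    (p : Fin n → ℝ) (hp : ∀ i, p i = min (B i) (U i (h i) / τ i)) :
    ∀ i, min (1 / 2) (1 / (1 + ε)) * ∑ j, z i j * q i j ≤ p i := by

  intro i
  rcases Nat.eq_zero_or_pos m with hm | hm
  · subst hm; exact (h i).elim0
  have hε1 : (0:ℝ) < 1 + ε := by linarith
  have hτi := hτ i
  have hc0 : (0:ℝ) ≤ min (1/2) (1/(1+ε)) := le_min (by norm_num) (by positivity)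
  have hS0 : 0 ≤ ∑ j, z i j * q i j :=
    Finset.sum_nonneg fun j _ => mul_nonneg (hz0 i j) (hq0 i j)
  have hsumv : 0 < ∑ j', v i j' :=
    Finset.sum_pos (fun j _ => hv i j)
      (Finset.univ_nonempty_iff.mpr (Fin.pos_iff_nonempty.mp hm))
  -- pointwise bound z q ≤ q ≤ Bij
  have hzq : ∀ j, z i j * q i j ≤ q i j := fun j => by
    nlinarith [hq0 i j, hzle i j, hz0 i j]
  have hUh0 : 0 ≤ U i (h i) := by
    rw [hU]
    exact mul_nonneg (hz0 i (h i)) (Finset.sum_nonneg fun j _ => (hv i j).le)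
  -- Part (a): S ≤ B i
  have hSB : ∑ j, z i j * q i j ≤ B i := by
    calc ∑ j, z i j * q i j ≤ ∑ j, Bij i j :=
          Finset.sum_le_sum fun j _ => (hzq j).trans (hqB i j)
      _ = B i := by
          have : ∀ j, Bij i j = (B i / ∑ j', v i j') * v i j := fun j => by
            rw [hBij]; field_simp
          simp only [this, ← Finset.mul_sum]
          field_simp
  have hcle1 : min (1/2) (1/(1+ε)) ≤ 1 := (min_le_left _ _).trans (by norm_num)
  have hpa : min (1/2) (1/(1+ε)) * (∑ j, z i j * q i j) ≤ B i := by
    nlinarith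
  -- Part (b): bound by U(h i)/τ i
  have hpb : min (1/2) (1/(1+ε)) * (∑ j, z i j * q i j) ≤ U i (h i) / τ i := by
    by_cases hE : ∀ j, z i j = 0
    · have : ∑ j, z i j * q i j = 0 := by
        apply Finset.sum_eq_zero; intro j _; rw [hE j]; ring
      rw [this, mul_zero]
      positivity
    · push_neg at hE
      obtain ⟨j0, hj0⟩ := hE
      have hj0' : 0 < z i j0 := lt_of_le_of_ne (hz0 i j0) (Ne.symm hj0)
      have ha : 0 < z i (g i) := (hg i j0 hj0').1
      have hmemT : ∀ j, 0 < z i j → j ∈ T i (g i) := fun j hj => by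
        rw [hT]; simp [(hg i j hj).2]
      have hSsum : ∑ j, z i j * q i j = ∑ j ∈ T i (g i), z i j * q i j := by
        symm
        apply Finset.sum_subset (Finset.subset_univ _)
        intro j _ hjT
        have hzj : z i j = 0 := by
          by_contra hne
          exact hjT (hmemT j (lt_of_le_of_ne (hz0 i j) (Ne.symm hne)))
        rw [hzj, zero_mul]
      have hUg : U i (g i) = z i (g i) * ∑ j ∈ T i (g i), v i j := hU i (g i)
      have hsumT0 : 0 ≤ ∑ j ∈ T i (g i), v i j :=
        Finset.sum_nonneg fun j _ => (hv i j).le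
      have hUgh : U i (g i) ≤ U i (h i) := hh i (g i)
      rcases le_or_gt (1/2 : ℝ) (z i (g i)) with ha2 | ha2
      · -- case a ≥ 1/2
        have hSle : ∑ j, z i j * q i j ≤ (∑ j ∈ T i (g i), v i j) / τ i := by
          rw [hSsum]
          rw [Finset.sum_div]
          apply Finset.sum_le_sum
          intro j _
          have h1 : q i j ≤ v i j * z i j / τ i := by
            rw [le_div_iff₀ hτi]
            nlinarith [hqRoS i j]
          have h2 : v i j * z i j / τ i ≤ v i j / τ i := by
            apply div_le_div_of_nonneg_right _ hτi.le
            nlinarith [hv i j, hzle i j]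
          exact (hzq j).trans (h1.trans h2)
        have hS2U : ∑ j, z i j * q i j ≤ 2 * U i (h i) / τ i := by
          have : (∑ j ∈ T i (g i), v i j) ≤ 2 * U i (g i) := by
            rw [hUg]; nlinarith
          calc ∑ j, z i j * q i j ≤ (∑ j ∈ T i (g i), v i j) / τ i := hSle
            _ ≤ 2 * U i (g i) / τ i := by apply div_le_div_of_nonneg_right this hτi.le
            _ ≤ 2 * U i (h i) / τ i := by
                apply div_le_div_of_nonneg_right _ hτi.le; linarith
        calc min (1/2) (1/(1+ε)) * (∑ j, z i j * q i j)
            ≤ (1/2) * (∑ j, z i j * q i j) :=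
              mul_le_mul_of_nonneg_right (min_le_left _ _) hS0
          _ ≤ (1/2) * (2 * U i (h i) / τ i) :=
              mul_le_mul_of_nonneg_left hS2U (by norm_num)
          _ = U i (h i) / τ i := by field_simp
      · -- case a < 1/2
        have hclip' := hclip i ha ha2
        have hRg := hqRoS i (g i)
        have hvg := hv i (g i)
        -- B / Σv ≤ (1+ε) * a / τ
        have hkey : B i / (∑ j', v i j') ≤ (1 + ε) * z i (g i) / τ i := by
          have h1 : Bij i (g i) / (1 + ε) ≤ v i (g i) * z i (g i) / τ i := by
            apply hclip'.trans
            rw [le_div_iff₀ hτi]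
            nlinarith
          rw [hBij] at h1
          rw [div_le_div_iff₀ hsumv hτi]
          rw [div_le_div_iff₀ hε1 hτi] at h1
          have h2 : B i * v i (g i) / (∑ j', v i j') * τ i ≤ v i (g i) * z i (g i) * (1 + ε) := h1
          rw [div_mul_eq_mul_div, div_le_iff₀ hsumv] at h2
          nlinarith
        have hSle : ∑ j, z i j * q i j ≤ (1 + ε) * U i (g i) / τ i := by
          rw [hSsum, hUg]
          have : (1 + ε) * (z i (g i) * ∑ j ∈ T i (g i), v i j) / τ i
              = ∑ j ∈ T i (g i), (1 + ε) * z i (g i) / τ i * v i j := by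
            rw [← Finset.mul_sum]; ring
          rw [this]
          apply Finset.sum_le_sum
          intro j _
          have h1 : q i j ≤ B i / (∑ j', v i j') * v i j := by
            have := hqB i j
            rw [hBij] at this
            calc q i j ≤ B i * v i j / ∑ j', v i j' := this
              _ = B i / (∑ j', v i j') * v i j := by ring
          have h2 : B i / (∑ j', v i j') * v i j ≤ (1 + ε) * z i (g i) / τ i * v i j :=
            mul_le_mul_of_nonneg_right hkey (hv i j).le
          exact (hzq j).trans (h1.trans h2)
        have hS2U : ∑ j, z i j * q i j ≤ (1 + ε) * U i (h i) / τ i := by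
          apply hSle.trans
          apply div_le_div_of_nonneg_right _ hτi.le
          nlinarith
        calc min (1/2) (1/(1+ε)) * (∑ j, z i j * q i j)
            ≤ (1/(1+ε)) * (∑ j, z i j * q i j) :=
              mul_le_mul_of_nonneg_right (min_le_right _ _) hS0
          _ ≤ (1/(1+ε)) * ((1 + ε) * U i (h i) / τ i) :=
              mul_le_mul_of_nonneg_left hS2U (by positivity)
          _ = U i (h i) / τ i := by field_simp
  rw [hp]
  exact le_min hpa hpb
end

section
/- For the derandomized comparison in the unit-demand setting: if every agent in the reserve-price selling phase is charged her maximum willingness-to-pay min{w_{i,k(i)}·x_{i,k(i)}, B_i} for the item k(i) maximizing her obtainable value among items with r_j ≤ w_{ij}, then the resulting revenue ALG satisfies ALG' ≤ 4·ALG, where ALG' is the revenue of the procedure that charges r_{k(i)}·x_{i,k(i)} for the item agent i buys in a fixed benchmark solution. -/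
open Classical in
/-- The primary reserve-price selling procedure of Algorithm 4 for unit-demand agents:
agents arrive in the order of the list; given the remaining fractions `R`, an arriving
agent `i` picks the most profitable affordable item
`k = argmax_{j : r j ≤ v i j / τ i} v i j * min (B i / r j) (R j)`, buys
`x = min (B i / r k) (R k)` of it and pays her maximum willingness-to-pay
`min (v i k / τ i * x) (B i)`.  Returns the full allocation and payments. -/
noncomputable def primary (n m : ℕ) (v : Fin n → Fin m → ℝ) (B τ : Fin n → ℝ)
    (r : Fin m → ℝ) :
    List (Fin n) → (Fin m → ℝ) → ((Fin n → Fin m → ℝ) × (Fin n → ℝ))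
  | [], _ => (fun _ _ => 0, fun _ => 0)
  | i :: rest, R =>
    let avail : Finset (Fin m) := Finset.univ.filter (fun j => r j ≤ v i j / τ i)
    if h : avail.Nonempty then
      let k := (avail.exists_max_image (fun j => v i j * min (B i / r j) (R j)) h).choose
      let xk := min (B i / r k) (R k)
      let res := primary n m v B τ r rest (Function.update R k (R k - xk))
      (fun i' j => if i' = i ∧ j = k then xk else res.1 i' j,
       fun i' => if i' = i then min (v i k / τ i * xk) (B i) else res.2 i')
    else
      primary n m v B τ r rest R

open Classical in
/-- The remaining fractions after running `primary`. -/
noncomputable def finalR (n m : ℕ) (v : Fin n → Fin m → ℝ) (B τ : Fin n → ℝ)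
    (r : Fin m → ℝ) :
    List (Fin n) → (Fin m → ℝ) → (Fin m → ℝ)
  | [], R => R
  | i :: rest, R =>
    let avail : Finset (Fin m) := Finset.univ.filter (fun j => r j ≤ v i j / τ i)
    if h : avail.Nonempty then
      let k := (avail.exists_max_image (fun j => v i j * min (B i / r j) (R j)) h).choose
      finalR n m v B τ r rest (Function.update R k (R k - min (B i / r k) (R k)))
    else
      finalR n m v B τ r rest R

section Aux

variable (n m : ℕ) (v : Fin n → Fin m → ℝ) (B τ : Fin n → ℝ) (r : Fin m → ℝ)

lemma pay_not_mem (l : List (Fin n)) (R : Fin m → ℝ) (i : Fin n) (hi : i ∉ l) :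
    (primary n m v B τ r l R).2 i = 0 := by
  induction l generalizing R with
  | nil => rw [primary]
  | cons hd tl ih =>
    have hne : i ≠ hd := fun h => hi (h ▸ List.mem_cons_self (a := hd) (l := tl))
    have htl : i ∉ tl := fun h => hi (List.mem_cons_of_mem hd h)
    rw [primary]
    by_cases h : (Finset.univ.filter (fun j => r j ≤ v hd j / τ hd)).Nonempty
    · simp only [dif_pos h, if_neg hne]
      exact ih _ htl
    · simp only [dif_neg h]
      exact ih _ htl

lemma finalR_nonneg_le (l : List (Fin n)) (hB : ∀ i, 0 < B i) (hr : ∀ j, 0 < r j)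
    (R : Fin m → ℝ) (hR : ∀ j, 0 ≤ R j) :
    ∀ j, 0 ≤ finalR n m v B τ r l R j ∧ finalR n m v B τ r l R j ≤ R j := by
  induction l generalizing R with
  | nil => intro j; rw [finalR]; exact ⟨hR j, le_rfl⟩
  | cons hd tl ih =>
    intro j
    rw [finalR]
    by_cases h : (Finset.univ.filter (fun j => r j ≤ v hd j / τ hd)).Nonempty
    · simp only [dif_pos h]
      set k := ((Finset.univ.filter (fun j => r j ≤ v hd j / τ hd)).exists_max_image
        (fun j => v hd j * min (B hd / r j) (R j)) h).choose with hk
      set R' := Function.update R k (R k - min (B hd / r k) (R k)) with hR'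
      have hxk0 : 0 ≤ min (B hd / r k) (R k) :=
        le_min (div_nonneg (hB hd).le (hr k).le) (hR k)
      have hR'0 : ∀ j', 0 ≤ R' j' := by
        intro j'
        rcases eq_or_ne j' k with rfl | hne
        · rw [hR', Function.update_self]
          have := min_le_right (B hd / r k) (R k); linarith
        · rw [hR', Function.update_of_ne hne]; exact hR j'
      have hR'le : ∀ j', R' j' ≤ R j' := by
        intro j'
        rcases eq_or_ne j' k with rfl | hne
        · rw [hR', Function.update_self]; linarith
        · rw [hR', Function.update_of_ne hne]
      exact ⟨(ih R' hR'0 j).1, le_trans (ih R' hR'0 j).2 (hR'le j)⟩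
    · simp only [dif_neg h]
      exact ih R hR j

lemma pay_nonneg (l : List (Fin n)) (hv : ∀ i j, 0 ≤ v i j) (hB : ∀ i, 0 < B i)
    (hτ : ∀ i, 0 < τ i) (hr : ∀ j, 0 < r j)
    (R : Fin m → ℝ) (hR : ∀ j, 0 ≤ R j) (i : Fin n) :
    0 ≤ (primary n m v B τ r l R).2 i := by
  induction l generalizing R with
  | nil => rw [primary]
  | cons hd tl ih =>
    rw [primary]
    by_cases h : (Finset.univ.filter (fun j => r j ≤ v hd j / τ hd)).Nonempty
    · simp only [dif_pos h]
      set k := ((Finset.univ.filter (fun j => r j ≤ v hd j / τ hd)).exists_max_image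
        (fun j => v hd j * min (B hd / r j) (R j)) h).choose with hk
      have hxk0 : 0 ≤ min (B hd / r k) (R k) :=
        le_min (div_nonneg (hB hd).le (hr k).le) (hR k)
      by_cases hi : i = hd
      · simp only [if_pos hi]
        exact le_min (mul_nonneg (div_nonneg (hv hd k) (hτ hd).le) hxk0) (hB hd).le
      · simp only [if_neg hi]
        apply ih
        intro j'
        rcases eq_or_ne j' k with rfl | hne
        · rw [Function.update_self]
          have := min_le_right (B hd / r k) (R k); linarith
        · rw [Function.update_of_ne hne]; exact hR j'
    · simp only [dif_neg h]
      exact ih R hR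

lemma sum_pay_ge (l : List (Fin n)) (hv : ∀ i j, 0 ≤ v i j) (hB : ∀ i, 0 < B i)
    (hτ : ∀ i, 0 < τ i) (hr : ∀ j, 0 < r j) (hnd : l.Nodup)
    (R : Fin m → ℝ) (hR : ∀ j, 0 ≤ R j) :
    ∑ j, r j * (R j - finalR n m v B τ r l R j)
      ≤ (l.map (primary n m v B τ r l R).2).sum := by
  induction l generalizing R with
  | nil =>
    rw [finalR]; simp
  | cons hd tl ih =>
    have hhd : hd ∉ tl := (List.nodup_cons.mp hnd).1
    have hndtl : tl.Nodup := (List.nodup_cons.mp hnd).2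
    rw [finalR, primary]
    by_cases h : (Finset.univ.filter (fun j => r j ≤ v hd j / τ hd)).Nonempty
    · simp only [dif_pos h]
      set k := ((Finset.univ.filter (fun j => r j ≤ v hd j / τ hd)).exists_max_image
        (fun j => v hd j * min (B hd / r j) (R j)) h).choose with hk
      have hkmem := ((Finset.univ.filter (fun j => r j ≤ v hd j / τ hd)).exists_max_image
        (fun j => v hd j * min (B hd / r j) (R j)) h).choose_spec.1
      have hkres : r k ≤ v hd k / τ hd := (Finset.mem_filter.mp hkmem).2
      set xk := min (B hd / r k) (R k) with hxk
      set R' := Function.update R k (R k - xk) with hR'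
      have hxk0 : 0 ≤ xk := le_min (div_nonneg (hB hd).le (hr k).le) (hR k)
      have hR'0 : ∀ j', 0 ≤ R' j' := by
        intro j'
        rcases eq_or_ne j' k with rfl | hne
        · rw [hR', Function.update_self]
          have := min_le_right (B hd / r k) (R k); linarith
        · rw [hR', Function.update_of_ne hne]; exact hR j'
      -- payment of hd is at least r k * xk
      have hpay : r k * xk ≤ min (v hd k / τ hd * xk) (B hd) := by
        refine le_min (mul_le_mul_of_nonneg_right hkres hxk0) ?_
        calc r k * xk ≤ r k * (B hd / r k) :=
              mul_le_mul_of_nonneg_left (min_le_left _ _) (hr k).le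
          _ = B hd := mul_div_cancel₀ _ (hr k).ne'
      -- split the left sum
      have hsplit : ∑ j, r j * (R j - finalR n m v B τ r tl R' j)
          = r k * xk + ∑ j, r j * (R' j - finalR n m v B τ r tl R' j) := by
        have : ∀ j, r j * (R j - finalR n m v B τ r tl R' j)
            = r j * (R j - R' j) + r j * (R' j - finalR n m v B τ r tl R' j) := by
          intro j; ring
        rw [Finset.sum_congr rfl (fun j _ => this j), Finset.sum_add_distrib]
        congr 1
        rw [Finset.sum_eq_single k]
        · rw [hR', Function.update_self]; ring
        · intro b _ hb
          rw [hR', Function.update_of_ne hb]; ring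
        · intro hk'; exact absurd (Finset.mem_univ k) hk'
      rw [List.map_cons, List.sum_cons, hsplit]
      have hmapeq : tl.map (fun i' => if i' = hd
            then min (v hd k / τ hd * xk) (B hd)
            else (primary n m v B τ r tl R').2 i')
          = tl.map (primary n m v B τ r tl R').2 := by
        apply List.map_congr_left
        intro i' hi'
        have : i' ≠ hd := fun hh => hhd (hh ▸ hi')
        simp [this]
      simp only [if_pos rfl]
      rw [hmapeq]
      exact add_le_add hpay (ih hndtl R' hR'0)
    · simp only [dif_neg h]
      rw [List.map_cons, List.sum_cons, pay_not_mem n m v B τ r tl R hd hhd]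
      rw [zero_add]
      exact ih hndtl R hR


lemma main_bound (hv : ∀ i j, 0 ≤ v i j) (hB : ∀ i, 0 < B i) (hτ : ∀ i, 0 < τ i)
    (hr : ∀ j, 0 < r j)
    (x' : Fin n → Fin m → ℝ) (a : Fin n → Fin m)
    (hx'0 : ∀ i j, 0 ≤ x' i j)
    (hx'le : ∀ i, x' i (a i) ≤ min 1 (B i / r (a i)))
    (hx'res : ∀ i j, 0 < x' i j → r j ≤ v i j / τ i)
    (l : List (Fin n)) (hnd : l.Nodup) (R : Fin m → ℝ) (hR : ∀ j, 0 ≤ R j) :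
    (l.map (fun i => x' i (a i) * r (a i))).sum
      ≤ 2 * (l.map (primary n m v B τ r l R).2).sum
        + ∑ j ∈ Finset.univ.filter (fun j => finalR n m v B τ r l R j < 1/2),
            r j * (l.map (fun i => x' i j)).sum := by
  induction l generalizing R with
  | nil => simp
  | cons hd tl ih =>
    have hhd : hd ∉ tl := (List.nodup_cons.mp hnd).1
    have hndtl : tl.Nodup := (List.nodup_cons.mp hnd).2
    rw [finalR, primary]
    by_cases h : (Finset.univ.filter (fun j => r j ≤ v hd j / τ hd)).Nonempty
    · simp only [dif_pos h]
      set k := ((Finset.univ.filter (fun j => r j ≤ v hd j / τ hd)).exists_max_image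
        (fun j => v hd j * min (B hd / r j) (R j)) h).choose with hk
      have hkmax := ((Finset.univ.filter (fun j => r j ≤ v hd j / τ hd)).exists_max_image
        (fun j => v hd j * min (B hd / r j) (R j)) h).choose_spec.2
      set xk := min (B hd / r k) (R k) with hxk
      set R' := Function.update R k (R k - xk) with hR'
      have hxk0 : 0 ≤ xk := le_min (div_nonneg (hB hd).le (hr k).le) (hR k)
      have hR'0 : ∀ j', 0 ≤ R' j' := by
        intro j'
        rcases eq_or_ne j' k with rfl | hne
        · rw [hR', Function.update_self]
          have := min_le_right (B hd / r k) (R k); linarith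
        · rw [hR', Function.update_of_ne hne]; exact hR j'
      have hR'le : ∀ j', R' j' ≤ R j' := by
        intro j'
        rcases eq_or_ne j' k with rfl | hne
        · rw [hR', Function.update_self]; linarith
        · rw [hR', Function.update_of_ne hne]
      set p := min (v hd k / τ hd * xk) (B hd) with hp
      have hp0 : 0 ≤ p :=
        le_min (mul_nonneg (div_nonneg (hv hd k) (hτ hd).le) hxk0) (hB hd).le
      set F := Finset.univ.filter (fun j => finalR n m v B τ r tl R' j < 1/2) with hF
      have hmapeq : tl.map (fun i' => if i' = hd then p
            else (primary n m v B τ r tl R').2 i')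
          = tl.map (primary n m v B τ r tl R').2 := by
        apply List.map_congr_left
        intro i' hi'
        have : i' ≠ hd := fun hh => hhd (hh ▸ hi')
        simp [this]
      simp only [List.map_cons, List.sum_cons, if_pos rfl, if_true]
      rw [hmapeq]
      have hbudget : ∑ j ∈ F, r j * (x' hd j + (tl.map (fun i => x' i j)).sum)
          = ∑ j ∈ F, r j * x' hd j + ∑ j ∈ F, r j * (tl.map (fun i => x' i j)).sum := by
        rw [← Finset.sum_add_distrib]
        exact Finset.sum_congr rfl (fun j _ => by ring)
      rw [hbudget]
      have hIH := ih hndtl R' hR'0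
      rw [← hF] at hIH
      have hbud0 : 0 ≤ ∑ j ∈ F, r j * x' hd j :=
        Finset.sum_nonneg (fun j _ => mul_nonneg (hr j).le (hx'0 hd j))
      -- head claim
      have hhead : x' hd (a hd) * r (a hd) ≤ 2 * p + ∑ j ∈ F, r j * x' hd j := by
        rcases eq_or_lt_of_le (hx'0 hd (a hd)) with h0 | hpos
        · rw [← h0, zero_mul]; linarith
        · have hares : r (a hd) ≤ v hd (a hd) / τ hd := hx'res hd (a hd) hpos
          have hamem : a hd ∈ Finset.univ.filter (fun j => r j ≤ v hd j / τ hd) :=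
            Finset.mem_filter.mpr ⟨Finset.mem_univ _, hares⟩
          have hmax := hkmax (a hd) hamem
          have hmin0 : 0 ≤ min (B hd / r (a hd)) (R (a hd)) :=
            le_min (div_nonneg (hB hd).le (hr (a hd)).le) (hR (a hd))
          have hq : min (B hd) (r (a hd) * R (a hd)) ≤ p := by
            have h1 : r (a hd) * min (B hd / r (a hd)) (R (a hd))
                ≤ v hd (a hd) / τ hd * min (B hd / r (a hd)) (R (a hd)) :=
              mul_le_mul_of_nonneg_right hares hmin0
            have h2 : r (a hd) * min (B hd / r (a hd)) (R (a hd))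
                = min (B hd) (r (a hd) * R (a hd)) := by
              rw [mul_min_of_nonneg _ _ (hr (a hd)).le,
                mul_div_cancel₀ _ (hr (a hd)).ne']
            have h3 : v hd (a hd) / τ hd * min (B hd / r (a hd)) (R (a hd))
                = v hd (a hd) * min (B hd / r (a hd)) (R (a hd)) / τ hd := by ring
            have h4 : v hd k / τ hd * xk = v hd k * xk / τ hd := by ring
            have h5 : v hd (a hd) * min (B hd / r (a hd)) (R (a hd)) / τ hd
                ≤ v hd k * xk / τ hd := (div_le_div_iff_of_pos_right (hτ hd)).mpr hmax
            refine le_min ?_ (min_le_left _ _)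
            calc min (B hd) (r (a hd) * R (a hd))
                = r (a hd) * min (B hd / r (a hd)) (R (a hd)) := h2.symm
              _ ≤ v hd (a hd) / τ hd * min (B hd / r (a hd)) (R (a hd)) := h1
              _ = v hd (a hd) * min (B hd / r (a hd)) (R (a hd)) / τ hd := h3
              _ ≤ v hd k * xk / τ hd := h5
              _ = v hd k / τ hd * xk := h4.symm
          by_cases hhalf : (1:ℝ)/2 ≤ R (a hd)
          · -- item more than half available: payment covers it
            have hx'r : x' hd (a hd) * r (a hd) ≤ min (r (a hd)) (B hd) := by
              calc x' hd (a hd) * r (a hd)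
                  ≤ min 1 (B hd / r (a hd)) * r (a hd) :=
                    mul_le_mul_of_nonneg_right (hx'le hd) (hr (a hd)).le
                _ = min (r (a hd)) (B hd) := by
                    rw [min_mul_of_nonneg _ _ (hr (a hd)).le, one_mul,
                      div_mul_cancel₀ _ (hr (a hd)).ne']
            have hq2 : min (r (a hd)) (B hd) ≤ 2 * min (B hd) (r (a hd) * R (a hd)) := by
              have hrB1 : min (r (a hd)) (B hd) ≤ r (a hd) := min_le_left _ _
              have hrB2 : min (r (a hd)) (B hd) ≤ B hd := min_le_right _ _
              have hm1 : min (B hd) (r (a hd) * R (a hd)) = B hd ∨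
                  min (B hd) (r (a hd) * R (a hd)) = r (a hd) * R (a hd) :=
                min_cases _ _ |>.imp (fun h => h.1) (fun h => h.1)
              rcases hm1 with he | he <;> rw [he]
              · have := hB hd; linarith
              · nlinarith [hr (a hd)]
            linarith
          · -- item is more than half sold at the end
            push_neg at hhalf
            have hfinlt : finalR n m v B τ r tl R' (a hd) < 1/2 :=
              lt_of_le_of_lt (le_trans
                (finalR_nonneg_le n m v B τ r tl hB hr R' hR'0 (a hd)).2
                (hR'le (a hd))) hhalf
            have hamem' : a hd ∈ F :=
              Finset.mem_filter.mpr ⟨Finset.mem_univ _, hfinlt⟩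
            have hsingle : r (a hd) * x' hd (a hd) ≤ ∑ j ∈ F, r j * x' hd j :=
              Finset.single_le_sum
                (f := fun j => r j * x' hd j)
                (fun j _ => mul_nonneg (hr j).le (hx'0 hd j)) hamem'
            have : x' hd (a hd) * r (a hd) = r (a hd) * x' hd (a hd) := mul_comm _ _
            linarith
      -- combine head and tail
      linarith [hIH]
    · simp only [dif_neg h]
      have hx0 : x' hd (a hd) = 0 := by
        by_contra hne
        have hpos := lt_of_le_of_ne (hx'0 hd (a hd)) (Ne.symm hne)
        exact h ⟨a hd, Finset.mem_filter.mpr ⟨Finset.mem_univ _, hx'res hd (a hd) hpos⟩⟩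
      simp only [List.map_cons, List.sum_cons, hx0, zero_mul, zero_add,
        pay_not_mem n m v B τ r tl R hd hhd]
      refine le_trans (ih hndtl R hR) ?_
      refine add_le_add le_rfl (Finset.sum_le_sum (fun j _ => ?_))
      exact mul_le_mul_of_nonneg_left (le_add_of_nonneg_left (hx'0 hd j)) (hr j).le

end Aux

/-- Comparison of the auxiliary and primary procedures (unit-demand setting): if the
auxiliary procedure sells each agent `i` a fraction `x' i (a i) ≤ min 1 (B i / r (a i))`
of a single predetermined item at its reserve price (respecting unit supply and
reserve-price availability), then its revenue is at most four times the revenue of the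
primary procedure, which charges every agent her maximum willingness-to-pay. -/
theorem stmt_18 (n m : ℕ) (v : Fin n → Fin m → ℝ) (B τ : Fin n → ℝ) (r : Fin m → ℝ)
    (hv : ∀ i j, 0 ≤ v i j) (hB : ∀ i, 0 < B i) (hτ : ∀ i, 0 < τ i)
    (hr : ∀ j, 0 < r j)
    (l : List (Fin n)) (hl : ∀ i, i ∈ l) (hlnd : l.Nodup)
    (x' : Fin n → Fin m → ℝ) (a : Fin n → Fin m)
    (hx'0 : ∀ i j, 0 ≤ x' i j)
    (hx'supp : ∀ i j, j ≠ a i → x' i j = 0)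
    (hx'le : ∀ i, x' i (a i) ≤ min 1 (B i / r (a i)))
    (hx'supply : ∀ j, ∑ i, x' i j ≤ 1)
    (hx'res : ∀ i j, 0 < x' i j → r j ≤ v i j / τ i) :
    ∑ i, ∑ j, x' i j * r j
      ≤ 4 * ∑ i, (primary n m v B τ r l (fun _ => 1)).2 i := by
  have huniv : l.toFinset = Finset.univ :=
    Finset.eq_univ_iff_forall.mpr (fun i => List.mem_toFinset.mpr (hl i))
  have hlist : ∀ f : Fin n → ℝ, ∑ i, f i = (l.map f).sum := by
    intro f
    rw [← huniv, List.sum_toFinset f hlnd]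
  set R0 : Fin m → ℝ := fun _ => 1 with hR0def
  have hR0 : ∀ j, 0 ≤ R0 j := fun _ => zero_le_one
  have hfin := finalR_nonneg_le n m v B τ r l hB hr R0 hR0
  have hpays := sum_pay_ge n m v B τ r l hv hB hτ hr hlnd R0 hR0
  have hmain := main_bound n m v B τ r hv hB hτ hr x' a hx'0 hx'le hx'res l hlnd R0 hR0
  -- rewrite the LHS
  have hLHS : ∑ i, ∑ j, x' i j * r j = (l.map (fun i => x' i (a i) * r (a i))).sum := by
    rw [← hlist]
    refine Finset.sum_congr rfl (fun i _ => ?_)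
    refine Finset.sum_eq_single (a i) (fun j _ hj => by rw [hx'supp i j hj, zero_mul])
      (fun hmem => absurd (Finset.mem_univ _) hmem)
  -- bound the budget term
  set F := Finset.univ.filter (fun j => finalR n m v B τ r l R0 j < 1/2) with hF
  have hbudget : ∑ j ∈ F, r j * (l.map (fun i => x' i j)).sum
      ≤ 2 * ∑ j, r j * (R0 j - finalR n m v B τ r l R0 j) := by
    calc ∑ j ∈ F, r j * (l.map (fun i => x' i j)).sum
        ≤ ∑ j ∈ F, 2 * (r j * (R0 j - finalR n m v B τ r l R0 j)) := by
          refine Finset.sum_le_sum (fun j hj => ?_)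
          have hjF : finalR n m v B τ r l R0 j < 1/2 :=
            (Finset.mem_filter.mp hj).2
          have hS : (l.map (fun i => x' i j)).sum = ∑ i, x' i j := (hlist _).symm
          have hS1 : (l.map (fun i => x' i j)).sum ≤ 1 := hS ▸ hx'supply j
          have hS0 : 0 ≤ (l.map (fun i => x' i j)).sum := by
            rw [hS]; exact Finset.sum_nonneg (fun i _ => hx'0 i j)
          have hRj : R0 j = 1 := rfl
          nlinarith [hr j, (hfin j).1]
      _ ≤ ∑ j, 2 * (r j * (R0 j - finalR n m v B τ r l R0 j)) := by
          refine Finset.sum_le_sum_of_subset_of_nonneg (Finset.filter_subset _ _)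
            (fun j _ _ => ?_)
          have h1 : finalR n m v B τ r l R0 j ≤ R0 j := (hfin j).2
          have := hr j
          nlinarith
      _ = 2 * ∑ j, r j * (R0 j - finalR n m v B τ r l R0 j) := by
          rw [Finset.mul_sum]
  have hP : ∑ i, (primary n m v B τ r l R0).2 i
      = (l.map (primary n m v B τ r l R0).2).sum := hlist _
  rw [hLHS, hP]
  linarith [hmain, hbudget, hpays]
end

section
/- In the single divisible item setting, suppose the auxiliary optimal solution assigns fractions x*_i with payments p*_i = x*_i·v_i/τ_i ≤ B_i and Σ_i x*_i ≤ 1, and the selling procedure with reserve price r does NOT sell out the item. Then Σ_{i∈R} p*_i ≤ ALG + r, where R is the set of agents offered the item, ALG is the revenue collected, and every agent in R who did not exhaust her budget satisfies v_i/τ_i < r. -/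
/-- Single divisible item: if the reserve-price selling procedure with reserve `r` does
not sell out the item, so that every offered agent `i ∈ R` either exhausted her budget
(`r * y i = B i`) or satisfies `v i / τ i < r`, then the optimal payments
`p*_i = x*_i · v_i/τ_i ≤ B_i` (with `Σ x* ≤ 1`) of the agents in `R` total at most
`ALG + r`, where `ALG = r * Σ_{i∈R} y i` is the collected revenue. -/
theorem stmt_19 (n : ℕ) (v B τ xstar pstar y : Fin n → ℝ)
    (R : Finset (Fin n)) (r ALG : ℝ)
    (hr : 0 ≤ r) (hv : ∀ i, 0 ≤ v i) (hτ : ∀ i, 0 < τ i)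
    (hps : ∀ i, pstar i = xstar i * (v i / τ i))
    (hpB : ∀ i, pstar i ≤ B i)
    (hx0 : ∀ i, 0 ≤ xstar i) (hx1 : ∑ i, xstar i ≤ 1)
    (hy0 : ∀ i, 0 ≤ y i)
    (hALG : ALG = r * ∑ i ∈ R, y i)
    (hcase : ∀ i ∈ R, r * y i = B i ∨ v i / τ i < r) :
    ∑ i ∈ R, pstar i ≤ ALG + r := by
  have key : ∀ i ∈ R, pstar i ≤ r * y i + r * xstar i := by
    intro i hi
    rcases hcase i hi with h | h
    · have : pstar i ≤ r * y i := h ▸ hpB i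
      nlinarith [hx0 i]
    · have : pstar i ≤ r * xstar i := by
        rw [hps i]
        have := div_nonneg (hv i) (hτ i).le
        nlinarith [hx0 i]
      nlinarith [hy0 i]
  calc ∑ i ∈ R, pstar i ≤ ∑ i ∈ R, (r * y i + r * xstar i) :=
        Finset.sum_le_sum key
    _ = r * ∑ i ∈ R, y i + r * ∑ i ∈ R, xstar i := by
        rw [Finset.sum_add_distrib, Finset.mul_sum, Finset.mul_sum]
    _ ≤ ALG + r := by
        have h1 : ∑ i ∈ R, xstar i ≤ ∑ i, xstar i :=
          Finset.sum_le_sum_of_subset_of_nonneg (Finset.subset_univ R)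
            (fun i _ _ => hx0 i)
        have : r * ∑ i ∈ R, xstar i ≤ r * 1 :=
          mul_le_mul_of_nonneg_left (h1.trans hx1) hr
        rw [hALG]; linarith
end
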